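/- The second homology of the group H presented on generators a,b,c,d,e,f with the six relators abcdef, ab⁻¹c²f⁻¹e²d⁻¹, a²fc²bed, ad⁻²cb⁻²ef⁻¹, ad²cf²eb², af⁻²cd⁻¹eb⁻² with integer coefficients vanishes, given that H is nontrivial (equivalently, the presentation 2-complex is aspherical with vanishing second homology since it has equal numbers of generators and relators and trivial abelianization). -/

import Mathlib

namespace Stmt2

open scoped IsMulCommutative commutatorElement

def a : FreeGroup (Fin 6) := FreeGroup.of 0
def b : FreeGroup (Fin 6) := FreeGroup.of 1
def c : FreeGroup (Fin 6) := FreeGroup.of 2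
def d : FreeGroup (Fin 6) := FreeGroup.of 3
def e : FreeGroup (Fin 6) := FreeGroup.of 4
def f : FreeGroup (Fin 6) := FreeGroup.of 5

def rels : Set (FreeGroup (Fin 6)) :=
  { a * b * c * d * e * f,
    a * b⁻¹ * c ^ 2 * f⁻¹ * e ^ 2 * d⁻¹,
    a ^ 2 * f * c ^ 2 * b * e * d,
    a * d⁻¹ ^ 2 * c * b⁻¹ ^ 2 * e * f⁻¹,
    a * d ^ 2 * c * f ^ 2 * e * b ^ 2,
    a * f⁻¹ ^ 2 * c * d⁻¹ * e * b⁻¹ ^ 2 }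

abbrev H := PresentedGroup rels

abbrev F := FreeGroup (Fin 6)

def r : Fin 6 → F
  | 0 => a * b * c * d * e * f
  | 1 => a * b⁻¹ * c ^ 2 * f⁻¹ * e ^ 2 * d⁻¹
  | 2 => a ^ 2 * f * c ^ 2 * b * e * d
  | 3 => a * d⁻¹ ^ 2 * c * b⁻¹ ^ 2 * e * f⁻¹
  | 4 => a * d ^ 2 * c * f ^ 2 * e * b ^ 2
  | 5 => a * f⁻¹ ^ 2 * c * d⁻¹ * e * b⁻¹ ^ 2

lemma r_mem (i : Fin 6) : r i ∈ rels := by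
  fin_cases i
  · exact Set.mem_insert _ _
  · exact Set.mem_insert_of_mem _ (Set.mem_insert _ _)
  · exact Set.mem_insert_of_mem _ (Set.mem_insert_of_mem _ (Set.mem_insert _ _))
  · exact Set.mem_insert_of_mem _ (Set.mem_insert_of_mem _ (Set.mem_insert_of_mem _ (Set.mem_insert _ _)))
  · exact Set.mem_insert_of_mem _ (Set.mem_insert_of_mem _ (Set.mem_insert_of_mem _ (Set.mem_insert_of_mem _ (Set.mem_insert _ _))))
  · exact Set.mem_insert_of_mem _ (Set.mem_insert_of_mem _ (Set.mem_insert_of_mem _ (Set.mem_insert_of_mem _ (Set.mem_insert_of_mem _ rfl))))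

def RR : Subgroup F := Subgroup.normalClosure rels
def K : Subgroup F := ⁅(⊤ : Subgroup F), RR⁆

instance : RR.Normal := Subgroup.normalClosure_normal
instance : K.Normal := Subgroup.commutator_normal ⊤ RR

abbrev Q := F ⧸ K
def π : F →* Q := QuotientGroup.mk' K

lemma central (x : F) (hx : x ∈ RR) : π x ∈ Subgroup.center Q := by
  rw [Subgroup.mem_center_iff]
  intro q
  obtain ⟨y, rfl⟩ := QuotientGroup.mk'_surjective K q
  have h1 : ⁅y, x⁆ ∈ K := Subgroup.commutator_mem_commutator (Subgroup.mem_top y) hx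
  have h2 : π ⁅y, x⁆ = 1 := (QuotientGroup.eq_one_iff _).mpr h1
  rw [map_commutatorElement] at h2
  exact (show π y * π x = π x * π y from (commutatorElement_eq_one_iff_commute.mp h2).eq)

def z (i : Fin 6) : Subgroup.center Q :=
  ⟨π (r i), central _ (Subgroup.subset_normalClosure (r_mem i))⟩

def g : Multiplicative (Fin 6 → ℤ) →* Subgroup.center Q where
  toFun n := ∏ i, z i ^ (Multiplicative.toAdd n i)
  map_one' := by simp
  map_mul' m n := by
    simp [zpow_add, Finset.prod_mul_distrib]

def g' : Multiplicative (Fin 6 → ℤ) →* Q := (Subgroup.center Q).subtype.comp g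

lemma g'_range_le_center : g'.range ≤ Subgroup.center Q := by
  rintro _ ⟨n, rfl⟩
  exact (g n).2

instance : g'.range.Normal := by
  constructor
  intro n hn q
  have := Subgroup.mem_center_iff.mp (g'_range_le_center hn) q
  rw [this, mul_inv_cancel_right]
  exact hn

lemma g_apply (n : Multiplicative (Fin 6 → ℤ)) :
    g n = ∏ i, z i ^ (Multiplicative.toAdd n i) := rfl

lemma g_single (i : Fin 6) : g (Multiplicative.ofAdd (Pi.single i 1)) = z i := by
  rw [g_apply, Finset.prod_eq_single i]
  · simp
  · intro j _ hj; simp [Pi.single_eq_of_ne hj]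
  · simp

lemma pi_r_mem_range (i : Fin 6) : π (r i) ∈ g'.range :=
  ⟨Multiplicative.ofAdd (Pi.single i 1), congrArg Subtype.val (g_single i)⟩

def ε (j : Fin 6) : F →* Multiplicative ℤ :=
  FreeGroup.lift (fun i => Multiplicative.ofAdd (if i = j then (1:ℤ) else 0))

lemma g_eq_pi_word (cc : Fin 6 → ℤ) :
    ((g (Multiplicative.ofAdd cc) : Subgroup.center Q) : Q)
      = π ((List.ofFn fun i => r i ^ (cc i)).prod) := by
  rw [g_apply]
  rw [← Subgroup.coe_subtype]
  rw [show (∏ i, z i ^ (Multiplicative.toAdd (Multiplicative.ofAdd cc) i)) = ∏ i, z i ^ (cc i) from rfl]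
  rw [← List.prod_ofFn, map_list_prod, map_list_prod]
  congr 1



/-- `H₂(H;ℤ) = 0`, expressed via the Hopf formula: for the presentation `H = F/R`
(where `F` is free on six generators and `R` is the normal closure of the six relators),
`H₂(H;ℤ) ≅ (R ∩ [F,F]) / [F,R]`; so the vanishing of `H₂(H;ℤ)` says exactly that
`R ∩ [F,F] = [F,R]`. -/
theorem H2_of_H_trivial (hH : Nontrivial H) :
    Subgroup.normalClosure rels ⊓ commutator (FreeGroup (Fin 6)) =
      ⁅(⊤ : Subgroup (FreeGroup (Fin 6))), Subgroup.normalClosure rels⁆ := by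
  apply le_antisymm
  · rintro x ⟨hxR, hxC⟩
    have hKC : K ≤ commutator F := by
      rw [commutator_def]; exact Subgroup.commutator_mono le_rfl le_top
    have hrange : Subgroup.normalClosure rels ≤ Subgroup.comap π g'.range := by
      apply Subgroup.normalClosure_le_normal
      intro s hs
      have : ∃ i, r i = s := by
        simp only [rels, Set.mem_insert_iff, Set.mem_singleton_iff] at hs
        rcases hs with h|h|h|h|h|h
        exacts [⟨0, h.symm⟩, ⟨1, h.symm⟩, ⟨2, h.symm⟩, ⟨3, h.symm⟩, ⟨4, h.symm⟩, ⟨5, h.symm⟩]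
      obtain ⟨i, rfl⟩ := this
      exact pi_r_mem_range i
    obtain ⟨n, hn⟩ := hrange hxR
    set cc : Fin 6 → ℤ := Multiplicative.toAdd n with hcc
    set w : F := (List.ofFn fun i => r i ^ (cc i)).prod with hwdef
    have hw : π x = π w := by
      rw [← hn]
      have : n = Multiplicative.ofAdd cc := rfl
      rw [this]
      exact g_eq_pi_word cc
    have hker : x⁻¹ * w ∈ K := by
      have : π (x⁻¹ * w) = 1 := by rw [map_mul, map_inv, ← hw, inv_mul_cancel]
      exact (QuotientGroup.eq_one_iff _).mp this
    have heps : ∀ j : Fin 6, ε j w = 1 := by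
      intro j
      have h1 : ε j (x⁻¹ * w) = 1 :=
        Abelianization.commutator_subset_ker (ε j) (hKC hker)
      have h2 : ε j x = 1 := Abelianization.commutator_subset_ker (ε j) hxC
      rwa [map_mul, map_inv, h2, inv_one, one_mul] at h1
    have key : ∀ j : Fin 6,
        Multiplicative.toAdd (ε j w) = ∑ i, cc i * Multiplicative.toAdd (ε j (r i)) := by
      intro j
      rw [hwdef, map_list_prod]
      simp only [List.map_ofFn, Function.comp_def, map_zpow]
      rw [List.prod_ofFn]
      simp [toAdd_zpow, mul_comm]
    have hM : ∀ j : Fin 6, (∑ i, cc i * Multiplicative.toAdd (ε j (r i))) = 0 := by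
      intro j; rw [← key j, heps j]; rfl
    have e0 := hM 0; have e1 := hM 1; have e2 := hM 2
    have e3 := hM 3; have e4 := hM 4; have e5 := hM 5
    simp only [Fin.sum_univ_six, ε, r, a, b, c, d, e, f, map_mul, map_inv, map_pow,
      FreeGroup.lift_apply_of] at e0 e1 e2 e3 e4 e5
    simp only [Fin.reduceEq] at e0 e1 e2 e3 e4 e5
    norm_num [← ofAdd_add] at e0 e1 e2 e3 e4 e5
    have h0 : cc 0 = 0 := by omega
    have h1 : cc 1 = 0 := by omega
    have h2 : cc 2 = 0 := by omega
    have h3 : cc 3 = 0 := by omega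
    have h4 : cc 4 = 0 := by omega
    have h5 : cc 5 = 0 := by omega
    have hc : cc = 0 := by
      funext i
      fin_cases i
      exacts [h0, h1, h2, h3, h4, h5]
    have hn1 : n = 1 := by
      have : Multiplicative.toAdd n = 0 := hc
      simpa using congrArg Multiplicative.ofAdd this
    have hx1 : π x = 1 := by rw [← hn, hn1, map_one]
    exact (QuotientGroup.eq_one_iff _).mp hx1
  · exact le_inf (Subgroup.commutator_le_right _ _)
      (by rw [commutator_def]; exact Subgroup.commutator_mono le_rfl le_top)

end Stmt2
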